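/- The variable ρ is insensitive in expectation to perturbations of any single propensity-score nuisance when the weight functions are held at their true values: fix j₀ ∈ {0,…,n} and a bounded 𝒢_{j₀}-measurable δ : Ω → ℝ, and let ρ̃ be obtained from ρ := ∏_{j=0}^{n} π_j + Σ_{j=0}^{n} (1_{A_j} − π_j)·w_j·∏_{k=0}^{j−1} π_k by replacing π_{j₀} with π_{j₀} + δ in every occurrence (the w_j held fixed). Then ∫ ρ̃ dP = ∫ ρ dP. (Since ρ is affine in π_{j₀}, this exact invariance expresses the Neyman-orthogonality of ρ with respect to the propensity scores, Lemma B.2.) -/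

import Mathlib

open MeasureTheory Finset

lemma aux_integrable_of_bound {Ω : Type*} {F : MeasurableSpace Ω} {P : Measure Ω}
    [IsFiniteMeasure P] {f : Ω → ℝ} {C : ℝ}
    (hm : AEStronglyMeasurable f P) (h : ∀ᵐ x ∂P, |f x| ≤ C) : Integrable f P :=
  (integrable_const C).mono' hm (by simpa [Real.norm_eq_abs] using h)

lemma aux_pullout {Ω : Type*} {F : MeasurableSpace Ω} {P : Measure Ω} [IsProbabilityMeasure P]
    {m : MeasurableSpace Ω} (hm : m ≤ F) {f g : Ω → ℝ} (hf : StronglyMeasurable[m] f)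
    (hfg : Integrable (fun x => f x * g x) P) (hg : Integrable g P) :
    ∫ x, f x * g x ∂P = ∫ x, f x * (P[g|m]) x ∂P := by
  have h1 : P[fun x => f x * g x|m] =ᵐ[P] fun x => f x * (P[g|m]) x := by
    simpa [Pi.mul_def] using condExp_mul_of_stronglyMeasurable_left hf (by simpa [Pi.mul_def] using hfg) hg
  calc ∫ x, f x * g x ∂P = ∫ x, (P[fun x => f x * g x|m]) x ∂P := (integral_condExp hm).symm
    _ = ∫ x, f x * (P[g|m]) x ∂P := integral_congr_ae h1

theorem rho_orthogonal_propensity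
    {Ω : Type*} {F : MeasurableSpace Ω} {P : Measure Ω} [IsProbabilityMeasure P]
    (n : ℕ) (G : ℕ → MeasurableSpace Ω) (hG_mono : Monotone G) (hG_le : ∀ j, G j ≤ F)
    (A : ℕ → Set Ω) (hA : ∀ j ≤ n, MeasurableSet[G (j + 1)] (A j))
    (π : ℕ → Ω → ℝ) (hπ_meas : ∀ j ≤ n, Measurable[G j] (π j))
    (ε : ℝ) (hε : 0 < ε) (hπ_bd : ∀ j ≤ n, ∀ᵐ x ∂P, ε ≤ π j x ∧ π j x ≤ 1)
    (hπ_ce : ∀ j ≤ n, π j =ᵐ[P] P[(A j).indicator (fun _ => (1 : ℝ)) | G j])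
    (w : ℕ → Ω → ℝ)
    (hw : ∀ j < n, w j =ᵐ[P] P[fun x => ∏ k ∈ Icc (j + 1) n, π k x | G j])
    (hw_n : w n = fun _ => (1 : ℝ))
    (j₀ : ℕ) (hj₀ : j₀ ≤ n)
    (δ : Ω → ℝ) (hδ_meas : Measurable[G j₀] δ) (Cδ : ℝ) (hδ_bd : ∀ x, |δ x| ≤ Cδ)
    (π' : ℕ → Ω → ℝ)
    (hπ' : π' = fun j => if j = j₀ then (fun x => π j x + δ x) else π j)
    (ρ ρ' : Ω → ℝ)
    (hρ : ρ = fun x =>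
      (∏ j ∈ range (n + 1), π j x)
      + ∑ j ∈ range (n + 1),
          ((A j).indicator (fun _ => (1 : ℝ)) x - π j x) * w j x * ∏ k ∈ range j, π k x)
    (hρ' : ρ' = fun x =>
      (∏ j ∈ range (n + 1), π' j x)
      + ∑ j ∈ range (n + 1),
          ((A j).indicator (fun _ => (1 : ℝ)) x - π' j x) * w j x
            * ∏ k ∈ range j, π' k x) :
    ∫ x, ρ' x ∂P = ∫ x, ρ x ∂P := by
  -- notation
  set I : ℕ → Ω → ℝ := fun j => (A j).indicator (fun _ => (1 : ℝ)) with hI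
  set g : ℕ → Ω → ℝ := fun j x => ∏ k ∈ Icc (j + 1) n, π k x with hg
  set W : ℕ → Ω → ℝ := fun j => P[g j | G j] with hW
  -- basic measurability
  have hπF : ∀ j ≤ n, Measurable (π j) := fun j hj => (hπ_meas j hj).mono (hG_le j) le_rfl
  have hIF : ∀ j ≤ n, Measurable (I j) := fun j hj =>
    measurable_const.indicator (hG_le (j + 1) _ (hA j hj))
  have hIabs : ∀ j, ∀ x, |I j x| ≤ 1 := by
    intro j x
    by_cases hx : x ∈ A j <;> simp [hI, Set.indicator, hx]
  have hπabs : ∀ j ≤ n, ∀ᵐ x ∂P, |π j x| ≤ 1 := fun j hj =>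
    (hπ_bd j hj).mono fun x hx => abs_le.2 ⟨by linarith [hx.1], hx.2⟩
  -- product bound helper
  have hprod_abs : ∀ (q : ℕ → Ω → ℝ) (c : ℝ) (S : Finset ℕ),
      (∀ k ∈ S, ∀ᵐ x ∂P, |q k x| ≤ c) → ∀ᵐ x ∂P, |∏ k ∈ S, q k x| ≤ c ^ S.card := by
    intro q c S h
    have h' : ∀ᵐ x ∂P, ∀ k ∈ (S : Set ℕ), |q k x| ≤ c :=
      (ae_ball_iff S.countable_toSet).2 (fun k hk => h k hk)
    filter_upwards [h'] with x hx
    calc |∏ k ∈ S, q k x| = ∏ k ∈ S, |q k x| := by rw [Finset.abs_prod]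
      _ ≤ ∏ _k ∈ S, c := Finset.prod_le_prod (fun k _ => abs_nonneg _) (fun k hk => hx k hk)
      _ = c ^ S.card := by rw [Finset.prod_const]
  -- facts about g and W
  have hgabs : ∀ j, ∀ᵐ x ∂P, |g j x| ≤ 1 := by
    intro j
    have := hprod_abs π 1 (Icc (j + 1) n) (fun k hk => hπabs k (mem_Icc.1 hk).2)
    simpa using this
  have hgF : ∀ j, Measurable (g j) := fun j =>
    Finset.measurable_prod _ (fun k hk => hπF k (mem_Icc.1 hk).2)
  have hg_int : ∀ j, Integrable (g j) P := fun j =>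
    aux_integrable_of_bound (hgF j).aestronglyMeasurable (hgabs j)
  have hW_sm : ∀ j, StronglyMeasurable[G j] (W j) := fun j => stronglyMeasurable_condExp
  have hWabs : ∀ j, ∀ᵐ x ∂P, |W j x| ≤ 1 := by
    intro j
    have h1 : ∀ᵐ x ∂P, |g j x| ≤ ((1 : NNReal) : ℝ) := by simpa using hgabs j
    simpa using ae_bdd_condExp_of_ae_bdd (m := G j) h1
  have hwW : ∀ j ≤ n, w j =ᵐ[P] W j := by
    intro j hj
    rcases lt_or_eq_of_le hj with h | h
    · exact hw j h
    · have h1 : W j = fun _ => (1 : ℝ) := by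
        have h2 : g j = fun _ => (1 : ℝ) := by
          funext x
          show (∏ k ∈ Icc (j + 1) n, π k x) = 1
          rw [h, Finset.Icc_eq_empty_of_lt (Nat.lt_succ_self n), Finset.prod_empty]
        show P[g j|G j] = _
        rw [h2]
        exact condExp_const (hG_le j) (1 : ℝ)
      rw [h1, h, hw_n]
  have hw_aesm : ∀ j ≤ n, AEStronglyMeasurable (w j) P := fun j hj =>
    (((hW_sm j).mono (hG_le j)).aestronglyMeasurable).congr (hwW j hj).symm
  have hwabs : ∀ j ≤ n, ∀ᵐ x ∂P, |w j x| ≤ 1 := by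
    intro j hj
    filter_upwards [hwW j hj, hWabs j] with x h1 h2
    rw [h1]; exact h2
  -- π' facts
  have hπ'_eq : ∀ k, k ≠ j₀ → π' k = π k := by intro k hk; simp [hπ', hk]
  have hπ'j₀ : π' j₀ = fun x => π j₀ x + δ x := by simp [hπ']
  have hπ'abs : ∀ k ≤ n, ∀ᵐ x ∂P, |π' k x| ≤ 1 + |Cδ| := by
    intro k hk
    by_cases h : k = j₀
    · subst h
      rw [hπ'j₀]
      filter_upwards [hπabs k hk] with x hx
      calc |π k x + δ x| ≤ |π k x| + |δ x| := abs_add_le _ _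
        _ ≤ 1 + |Cδ| := add_le_add hx (le_trans (hδ_bd x) (le_abs_self _))
    · rw [hπ'_eq k h]
      filter_upwards [hπabs k hk] with x hx
      have : (0:ℝ) ≤ |Cδ| := abs_nonneg _
      linarith
  have hπ'F : ∀ k ≤ n, Measurable (π' k) := by
    intro k hk
    by_cases h : k = j₀
    · subst h; rw [hπ'j₀]
      exact (hπF k hk).add (hδ_meas.mono (hG_le k) le_rfl)
    · rw [hπ'_eq k h]; exact hπF k hk
  -- key: ∫ (I j - π j) * f = 0 for f  G_j-measurable bounded
  have hkey : ∀ j ≤ n, ∀ (f : Ω → ℝ) (C : ℝ), StronglyMeasurable[G j] f →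
      (∀ᵐ x ∂P, |f x| ≤ C) → ∫ x, (I j x - π j x) * f x ∂P = 0 := by
    intro j hj f C hfm hfC
    have hfF : AEStronglyMeasurable f P := (hfm.mono (hG_le j)).aestronglyMeasurable
    have hIint : Integrable (I j) P :=
      aux_integrable_of_bound (hIF j hj).aestronglyMeasurable (ae_of_all _ (hIabs j))
    have hfI_int : Integrable (fun x => f x * I j x) P := by
      refine aux_integrable_of_bound (C := C) (hfF.mul (hIF j hj).aestronglyMeasurable) ?_
      filter_upwards [hfC] with x hx
      calc |f x * I j x| = |f x| * |I j x| := abs_mul _ _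
        _ ≤ |f x| := mul_le_of_le_one_right (abs_nonneg _) (hIabs j x)
        _ ≤ C := hx
    have hfπ_int : Integrable (fun x => f x * π j x) P := by
      refine aux_integrable_of_bound (C := C) (hfF.mul (hπF j hj).aestronglyMeasurable) ?_
      filter_upwards [hfC, hπabs j hj] with x hx hπx
      calc |f x * π j x| = |f x| * |π j x| := abs_mul _ _
        _ ≤ |f x| := mul_le_of_le_one_right (abs_nonneg _) hπx
        _ ≤ C := hx
    have h1 : ∫ x, (I j x - π j x) * f x ∂P
        = ∫ x, (f x * I j x - f x * π j x) ∂P := by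
      congr 1; funext x; ring
    have h2 : ∫ x, f x * I j x ∂P = ∫ x, f x * (P[I j|G j]) x ∂P :=
      aux_pullout (hG_le j) hfm hfI_int hIint
    have h3 : ∫ x, f x * π j x ∂P = ∫ x, f x * (P[I j|G j]) x ∂P := by
      refine integral_congr_ae ?_
      filter_upwards [hπ_ce j hj] with x hx
      rw [hx]
    rw [h1, integral_sub hfI_int hfπ_int, h2, h3, sub_self]
  -- zero lemma for the correction terms
  have hzero : ∀ j ≤ n, ∀ (h : Ω → ℝ) (C : ℝ), StronglyMeasurable[G j] h →
      (∀ᵐ x ∂P, |h x| ≤ C) → ∫ x, (I j x - π j x) * w j x * h x ∂P = 0 := by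
    intro j hj h C hm hC
    have e1 : (fun x => (I j x - π j x) * w j x * h x)
        =ᵐ[P] (fun x => (I j x - π j x) * (W j x * h x)) := by
      filter_upwards [hwW j hj] with x hx
      rw [hx]; ring
    rw [integral_congr_ae e1]
    refine hkey j hj _ (1 * C) ((hW_sm j).mul hm) ?_
    filter_upwards [hWabs j, hC] with x h1 h2
    calc |W j x * h x| = |W j x| * |h x| := abs_mul _ _
      _ ≤ 1 * C := mul_le_mul h1 h2 (abs_nonneg _) one_pos.le
  -- measurability of partial products of π'
  have hπ'_m : ∀ j ≤ n + 1, ∀ k < j, Measurable[G j] (π' k) := by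
    intro j hjn k hk
    have hkn : k ≤ n := by omega
    by_cases hkj : k = j₀
    · subst hkj
      rw [hπ'j₀]
      exact ((hπ_meas _ hkn).mono (hG_mono hk.le) le_rfl).add
        (hδ_meas.mono (hG_mono hk.le) le_rfl)
    · rw [hπ'_eq k hkj]
      exact (hπ_meas k hkn).mono (hG_mono hk.le) le_rfl
  have hprod'_sm : ∀ j ≤ n + 1, StronglyMeasurable[G j] (fun x => ∏ k ∈ range j, π' k x) :=
    fun j hj => (Finset.measurable_prod _ (fun k hk => hπ'_m j hj k (mem_range.1 hk))).stronglyMeasurable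
  have hprod_sm : ∀ j ≤ n + 1, StronglyMeasurable[G j] (fun x => ∏ k ∈ range j, π k x) :=
    fun j hj => (Finset.measurable_prod _ (fun k hk =>
      (hπ_meas k (by have := mem_range.1 hk; omega)).mono (hG_mono (mem_range.1 hk).le) le_rfl)).stronglyMeasurable
  have hprod_abs_π : ∀ (S : Finset ℕ), (∀ k ∈ S, k ≤ n) → ∀ᵐ x ∂P, |∏ k ∈ S, π k x| ≤ 1 := by
    intro S hS
    have := hprod_abs π 1 S (fun k hk => hπabs k (hS k hk))
    simpa using this
  have hprod'_abs : ∀ (S : Finset ℕ), (∀ k ∈ S, k ≤ n) →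
      ∀ᵐ x ∂P, |∏ k ∈ S, π' k x| ≤ (1 + |Cδ|) ^ S.card :=
    fun S hS => hprod_abs π' (1 + |Cδ|) S (fun k hk => hπ'abs k (hS k hk))
  -- the integral of ρ
  have int_Pi : Integrable (fun x => ∏ j ∈ range (n + 1), π j x) P := by
    refine aux_integrable_of_bound
      (Finset.measurable_prod _ (fun k hk => hπF k (by have := mem_range.1 hk; omega))).aestronglyMeasurable
      (hprod_abs_π (range (n + 1)) (fun k hk => by have := mem_range.1 hk; omega))
  have int_T : ∀ j ∈ range (n + 1),
      Integrable (fun x => (I j x - π j x) * w j x * ∏ k ∈ range j, π k x) P := by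
    intro j hjr
    have hj : j ≤ n := by have := mem_range.1 hjr; omega
    refine aux_integrable_of_bound (C := 2)
      ((((hIF j hj).aestronglyMeasurable.sub (hπF j hj).aestronglyMeasurable).mul
        (hw_aesm j hj)).mul
        (((hprod_sm j (by omega)).mono (hG_le j)).aestronglyMeasurable)) ?_
    filter_upwards [hπabs j hj, hwabs j hj,
      hprod_abs_π (range j) (fun k hk => by have := mem_range.1 hk; omega)] with x h1 h2 h3
    have hIx := hIabs j x
    calc |(I j x - π j x) * w j x * ∏ k ∈ range j, π k x|
        = |I j x - π j x| * |w j x| * |∏ k ∈ range j, π k x| := by rw [abs_mul, abs_mul]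
      _ ≤ 2 * 1 * 1 := by
          refine mul_le_mul (mul_le_mul ?_ h2 (abs_nonneg _) (by norm_num)) h3 (abs_nonneg _) (by norm_num)
          calc |I j x - π j x| ≤ |I j x| + |π j x| := abs_sub _ _
            _ ≤ 2 := by linarith
      _ ≤ 2 := by norm_num
  have hρ_eq : ∫ x, ρ x ∂P = ∫ x, ∏ j ∈ range (n + 1), π j x ∂P := by
    rw [hρ]
    rw [integral_add int_Pi (integrable_finset_sum _ int_T), integral_finset_sum _ int_T]
    rw [Finset.sum_eq_zero, add_zero]
    intro j hjr
    have hj : j ≤ n := by have := mem_range.1 hjr; omega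
    exact hzero j hj _ 1 (hprod_sm j (by omega))
      (hprod_abs_π (range j) (fun k hk => by have := mem_range.1 hk; omega))
  -- now the ρ' side
  have hjr₀ : j₀ ∈ range (n + 1) := mem_range.2 (by omega)
  set E : Ω → ℝ := fun x => ∏ k ∈ (range (n + 1)).erase j₀, π k x with hEdef
  have hE_meas : Measurable E := Finset.measurable_prod _ (fun k hk =>
    hπF k (by have := mem_range.1 (Finset.mem_of_mem_erase hk); omega))
  have hEabs : ∀ᵐ x ∂P, |E x| ≤ 1 := hprod_abs_π _ (fun k hk => by
    have := mem_range.1 (Finset.mem_of_mem_erase hk); omega)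
  have hδF : AEStronglyMeasurable δ P := ((hδ_meas.mono (hG_le j₀) le_rfl)).aestronglyMeasurable
  have int_δE : Integrable (fun x => δ x * E x) P := by
    refine aux_integrable_of_bound (C := |Cδ|) (hδF.mul hE_meas.aestronglyMeasurable) ?_
    filter_upwards [hEabs] with x hx
    rw [abs_mul]
    calc |δ x| * |E x| ≤ |Cδ| * 1 :=
          mul_le_mul (le_trans (hδ_bd x) (le_abs_self _)) hx (abs_nonneg _) (abs_nonneg _)
      _ = |Cδ| := by ring
  have hPi'_int_eq : ∫ x, ∏ j ∈ range (n + 1), π' j x ∂P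
      = (∫ x, ∏ j ∈ range (n + 1), π j x ∂P) + ∫ x, δ x * E x ∂P := by
    have hsplit : (fun x => ∏ j ∈ range (n + 1), π' j x)
        = fun x => (∏ j ∈ range (n + 1), π j x) + δ x * E x := by
      funext x
      have e1 : ∏ k ∈ (range (n + 1)).erase j₀, π' k x = E x :=
        Finset.prod_congr rfl (fun k hk => by rw [hπ'_eq k (Finset.ne_of_mem_erase hk)])
      calc ∏ j ∈ range (n + 1), π' j x
          = π' j₀ x * ∏ k ∈ (range (n + 1)).erase j₀, π' k x :=
            (Finset.mul_prod_erase _ _ hjr₀).symm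
        _ = (π j₀ x + δ x) * E x := by rw [congrFun hπ'j₀ x, e1]
        _ = π j₀ x * E x + δ x * E x := by ring
        _ = (∏ j ∈ range (n + 1), π j x) + δ x * E x := by
            rw [show π j₀ x * E x = ∏ j ∈ range (n + 1), π j x from
              Finset.mul_prod_erase _ (fun k => π k x) hjr₀]
    rw [hsplit, integral_add int_Pi int_δE]
  have int_Pi' : Integrable (fun x => ∏ j ∈ range (n + 1), π' j x) P :=
    aux_integrable_of_bound
      (Finset.measurable_prod _ (fun k hk =>
        hπ'F k (by have := mem_range.1 hk; omega))).aestronglyMeasurable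
      (hprod'_abs (range (n + 1)) (fun k hk => by have := mem_range.1 hk; omega))
  have int_T' : ∀ j ∈ range (n + 1),
      Integrable (fun x => (I j x - π' j x) * w j x * ∏ k ∈ range j, π' k x) P := by
    intro j hjr
    have hj : j ≤ n := by have := mem_range.1 hjr; omega
    refine aux_integrable_of_bound (C := (2 + |Cδ|) * 1 * (1 + |Cδ|) ^ (range j).card)
      ((((hIF j hj).aestronglyMeasurable.sub (hπ'F j hj).aestronglyMeasurable).mul
        (hw_aesm j hj)).mul
        (Finset.measurable_prod _ (fun k hk =>
          hπ'F k (by have := mem_range.1 hk; omega))).aestronglyMeasurable) ?_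
    filter_upwards [hπ'abs j hj, hwabs j hj,
      hprod'_abs (range j) (fun k hk => by have := mem_range.1 hk; omega)] with x h1 h2 h3
    have hIx := hIabs j x
    have hc : (0:ℝ) ≤ |Cδ| := abs_nonneg _
    calc |(I j x - π' j x) * w j x * ∏ k ∈ range j, π' k x|
        = |I j x - π' j x| * |w j x| * |∏ k ∈ range j, π' k x| := by rw [abs_mul, abs_mul]
      _ ≤ (2 + |Cδ|) * 1 * (1 + |Cδ|) ^ (range j).card := by
          refine mul_le_mul (mul_le_mul ?_ h2 (abs_nonneg _) (by linarith)) h3 (abs_nonneg _) ?_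
          · calc |I j x - π' j x| ≤ |I j x| + |π' j x| := abs_sub _ _
              _ ≤ 2 + |Cδ| := by linarith
          · positivity
  have int_δwp : Integrable (fun x => δ x * (w j₀ x * ∏ k ∈ range j₀, π k x)) P := by
    refine aux_integrable_of_bound (C := |Cδ| * (1 * 1))
      (hδF.mul ((hw_aesm j₀ hj₀).mul
        (((hprod_sm j₀ (by omega)).mono (hG_le j₀)).aestronglyMeasurable))) ?_
    filter_upwards [hwabs j₀ hj₀,
      hprod_abs_π (range j₀) (fun k hk => by have := mem_range.1 hk; omega)] with x h1 h2
    calc |δ x * (w j₀ x * ∏ k ∈ range j₀, π k x)|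
        = |δ x| * (|w j₀ x| * |∏ k ∈ range j₀, π k x|) := by rw [abs_mul, abs_mul]
      _ ≤ |Cδ| * (1 * 1) := by
          refine mul_le_mul (le_trans (hδ_bd x) (le_abs_self _))
            (mul_le_mul h1 h2 (abs_nonneg _) (by norm_num))
            (mul_nonneg (abs_nonneg _) (abs_nonneg _)) (abs_nonneg _)
  -- the tower-property cancellation
  have hX : ∫ x, δ x * (w j₀ x * ∏ k ∈ range j₀, π k x) ∂P = ∫ x, δ x * E x ∂P := by
    have e1 : (fun x => δ x * (w j₀ x * ∏ k ∈ range j₀, π k x))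
        =ᵐ[P] (fun x => (δ x * ∏ k ∈ range j₀, π k x) * W j₀ x) := by
      filter_upwards [hwW j₀ hj₀] with x hx
      rw [hx]; ring
    rw [integral_congr_ae e1]
    have hf_sm : StronglyMeasurable[G j₀] (fun x => δ x * ∏ k ∈ range j₀, π k x) :=
      hδ_meas.stronglyMeasurable.mul (hprod_sm j₀ (by omega))
    have int_fg : Integrable (fun x => (δ x * ∏ k ∈ range j₀, π k x) * g j₀ x) P := by
      refine aux_integrable_of_bound (C := |Cδ| * 1 * 1)
        ((hδF.mul (((hprod_sm j₀ (by omega)).mono (hG_le j₀)).aestronglyMeasurable)).mul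
          (hgF j₀).aestronglyMeasurable) ?_
      filter_upwards [hgabs j₀,
        hprod_abs_π (range j₀) (fun k hk => by have := mem_range.1 hk; omega)] with x h1 h2
      calc |(δ x * ∏ k ∈ range j₀, π k x) * g j₀ x|
          = |δ x| * |∏ k ∈ range j₀, π k x| * |g j₀ x| := by rw [abs_mul, abs_mul]
        _ ≤ |Cδ| * 1 * 1 := by
            refine mul_le_mul (mul_le_mul (le_trans (hδ_bd x) (le_abs_self _)) h2
              (abs_nonneg _) (abs_nonneg _)) h1 (abs_nonneg _) ?_
            positivity
    have h2 := aux_pullout (hG_le j₀) hf_sm int_fg (hg_int j₀)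
    have h2' : ∫ x, (δ x * ∏ k ∈ range j₀, π k x) * W j₀ x ∂P
        = ∫ x, (δ x * ∏ k ∈ range j₀, π k x) * g j₀ x ∂P := h2.symm
    rw [h2']
    refine integral_congr_ae (Filter.Eventually.of_forall (fun x => ?_))
    have hdisj : Disjoint (range j₀) (Icc (j₀ + 1) n) := by
      rw [Finset.disjoint_left]
      intro k hk1 hk2
      rw [mem_range] at hk1
      rw [mem_Icc] at hk2
      omega
    have hunion : range j₀ ∪ Icc (j₀ + 1) n = (range (n + 1)).erase j₀ := by
      ext k
      simp only [mem_union, mem_range, mem_Icc, Finset.mem_erase]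
      omega
    calc (δ x * ∏ k ∈ range j₀, π k x) * g j₀ x
        = δ x * ((∏ k ∈ range j₀, π k x) * ∏ k ∈ Icc (j₀ + 1) n, π k x) := by
          show (δ x * ∏ k ∈ range j₀, π k x) * (∏ k ∈ Icc (j₀ + 1) n, π k x) = _
          ring
      _ = δ x * ∏ k ∈ range j₀ ∪ Icc (j₀ + 1) n, π k x := by
          rw [Finset.prod_union hdisj]
      _ = δ x * E x := by rw [hunion]
  -- value of each ρ' correction term
  have hT' : ∀ j ∈ range (n + 1),
      (∫ x, (I j x - π' j x) * w j x * ∏ k ∈ range j, π' k x ∂P)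
      = if j = j₀ then -(∫ x, δ x * (w j₀ x * ∏ k ∈ range j₀, π k x) ∂P) else 0 := by
    intro j hjr
    have hj : j ≤ n := by have := mem_range.1 hjr; omega
    by_cases hjj : j = j₀
    · rw [if_pos hjj]
      subst hjj
      have e0 : ∀ x, (∏ k ∈ range j, π' k x) = ∏ k ∈ range j, π k x := fun x =>
        Finset.prod_congr rfl (fun k hk => by
          rw [hπ'_eq k (by have := mem_range.1 hk; omega)])
      have e1 : (fun x => (I j x - π' j x) * w j x * ∏ k ∈ range j, π' k x)
          = fun x => (I j x - π j x) * w j x * (∏ k ∈ range j, π k x)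
              - δ x * (w j x * ∏ k ∈ range j, π k x) := by
        funext x
        rw [e0 x, congrFun hπ'j₀ x]
        ring
      rw [e1, integral_sub (int_T j hjr) int_δwp,
        hzero j hj _ 1 (hprod_sm j (by omega))
          (hprod_abs_π (range j) (fun k hk => by have := mem_range.1 hk; omega)),
        zero_sub]
    · rw [if_neg hjj]
      have e1 : (fun x => (I j x - π' j x) * w j x * ∏ k ∈ range j, π' k x)
          = fun x => (I j x - π j x) * w j x * ∏ k ∈ range j, π' k x := by
        funext x
        rw [hπ'_eq j hjj]
      rw [e1]
      exact hzero j hj _ ((1 + |Cδ|) ^ (range j).card) (hprod'_sm j (by omega))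
        (hprod'_abs (range j) (fun k hk => by have := mem_range.1 hk; omega))
  -- assemble
  have hρ'_eq : ∫ x, ρ' x ∂P = ∫ x, ∏ j ∈ range (n + 1), π j x ∂P := by
    rw [hρ', integral_add int_Pi' (integrable_finset_sum _ int_T'),
      integral_finset_sum _ int_T', Finset.sum_congr rfl hT', Finset.sum_ite_eq' (range (n + 1)) j₀,
      if_pos hjr₀, hPi'_int_eq, hX]
    ring
  rw [hρ'_eq, hρ_eq]
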